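/- Let λ ∈ ℂ with Re λ < 0 and μ ∈ ℂ with Re μ > 0 and |λ + conj μ| ≤ ε. Then min over x ∈ ℂ of ‖z·v[−conj λ] + x·v[μ]‖_{H₂}² equals |z|² · |μ + conj λ|² / (2|μ − λ|² · Re(−λ)), and consequently this minimum is at most |z|² ε² / (2 |Re λ|³). -/

import Mathlib

open MeasureTheory Complex Filter

lemma integrablePoisson (c a : ℝ) (ha : 0 < a) :
    Integrable fun ω : ℝ => ((ω - c) ^ 2 + a ^ 2)⁻¹ := by
  have h0 : Integrable fun x : ℝ => (1 + x ^ 2)⁻¹ := integrable_inv_one_add_sq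
  have h2 : Integrable fun x : ℝ => (1 + ((x - c) / a) ^ 2)⁻¹ :=
    (h0.comp_div ha.ne').comp_sub_right c
  refine (h2.const_mul (a ^ 2)⁻¹).congr (Eventually.of_forall fun x => ?_)
  field_simp
  ring

lemma integralPoisson (c a : ℝ) (ha : 0 < a) :
    ∫ ω : ℝ, ((ω - c) ^ 2 + a ^ 2)⁻¹ = Real.pi / a := by
  have hderiv : ∀ x : ℝ, HasDerivAt (fun ω : ℝ => a⁻¹ * Real.arctan ((ω - c) / a))
      (((x - c) ^ 2 + a ^ 2)⁻¹) x := by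
    intro x
    have h1 : HasDerivAt (fun ω : ℝ => (ω - c) / a) (1 / a) x := by
      simpa using ((hasDerivAt_id x).sub_const c).div_const a
    have h2 := ((Real.hasDerivAt_arctan ((x - c) / a)).comp x h1).const_mul a⁻¹
    have : a⁻¹ * (1 / (1 + ((x - c) / a) ^ 2) * (1 / a)) = ((x - c) ^ 2 + a ^ 2)⁻¹ := by
      rw [div_pow]
      field_simp
      ring
    rw [this] at h2
    exact h2.congr_deriv rfl |>.congr_of_eventuallyEq (Eventually.of_forall fun y => rfl)
  have hu : Tendsto (fun ω : ℝ => (ω - c) / a) atTop atTop := by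
    apply Tendsto.atTop_div_const ha
    exact tendsto_atTop_add_const_right _ (-c) tendsto_id |>.congr fun x => by simp only [id_eq]; ring
  have hd : Tendsto (fun ω : ℝ => (ω - c) / a) atBot atBot := by
    apply Tendsto.atBot_div_const ha
    exact tendsto_atBot_add_const_right _ (-c) tendsto_id |>.congr fun x => by simp only [id_eq]; ring
  have htop : Tendsto (fun ω : ℝ => a⁻¹ * Real.arctan ((ω - c) / a)) atTop
      (nhds (a⁻¹ * (Real.pi / 2))) := by
    exact Tendsto.const_mul _ (tendsto_nhds_of_tendsto_nhdsWithin
      (Real.tendsto_arctan_atTop.comp hu))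
  have hbot : Tendsto (fun ω : ℝ => a⁻¹ * Real.arctan ((ω - c) / a)) atBot
      (nhds (a⁻¹ * (-(Real.pi / 2)))) := by
    exact Tendsto.const_mul _ (tendsto_nhds_of_tendsto_nhdsWithin
      (Real.tendsto_arctan_atBot.comp hd))
  have := MeasureTheory.integral_of_hasDerivAt_of_tendsto hderiv
    (integrablePoisson c a ha) hbot htop
  rw [this]; field_simp; ring

lemma tendsto_ratio (c1 c2 a1 a2 : ℝ) (h2 : 0 < a2) :
    Tendsto (fun ω : ℝ => ((ω - c1) ^ 2 + a1 ^ 2) / ((ω - c2) ^ 2 + a2 ^ 2))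
      atTop (nhds 1) := by
  have hpoly : ∀ c a : ℝ, Tendsto (fun ω : ℝ => ((ω - c) ^ 2 + a ^ 2) / ω ^ 2) atTop (nhds 1) := by
    intro c a
    have h1 : Tendsto (fun ω : ℝ => (1 - c / ω) ^ 2 + (a / ω) ^ 2) atTop (nhds 1) := by
      have hc : Tendsto (fun ω : ℝ => c / ω) atTop (nhds 0) :=
        Tendsto.div_atTop tendsto_const_nhds tendsto_id
      have ha : Tendsto (fun ω : ℝ => a / ω) atTop (nhds 0) :=
        Tendsto.div_atTop tendsto_const_nhds tendsto_id
      have := (((tendsto_const_nhds (x := (1:ℝ))).sub hc).pow 2).add (ha.pow 2)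
      simpa using this
    refine h1.congr' ?_
    filter_upwards [eventually_ne_atTop 0] with ω hω
    field_simp
  have := (hpoly c1 a1).div (hpoly c2 a2) one_ne_zero
  rw [div_one] at this
  refine this.congr' ?_
  filter_upwards [eventually_ne_atTop 0] with ω hω
  have hD2 : (ω - c2) ^ 2 + a2 ^ 2 ≠ 0 := by positivity
  simp only [Pi.div_apply]
  field_simp

lemma integral_g_zero (c1 c2 a1 a2 K : ℝ) (h1 : 0 < a1) (h2 : 0 < a2)
    (hint : Integrable fun ω : ℝ =>
      K * ((ω - c1) / ((ω - c1) ^ 2 + a1 ^ 2) - (ω - c2) / ((ω - c2) ^ 2 + a2 ^ 2))) :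
    (∫ ω : ℝ, K * ((ω - c1) / ((ω - c1) ^ 2 + a1 ^ 2) - (ω - c2) / ((ω - c2) ^ 2 + a2 ^ 2))) = 0 := by
  set F : ℝ → ℝ := fun ω => (K / 2) *
    (Real.log ((ω - c1) ^ 2 + a1 ^ 2) - Real.log ((ω - c2) ^ 2 + a2 ^ 2)) with hF
  have hD : ∀ (c a : ℝ), 0 < a → ∀ ω : ℝ, (0:ℝ) < (ω - c) ^ 2 + a ^ 2 := by
    intro c a ha ω; positivity
  have hderiv : ∀ x : ℝ, HasDerivAt F
      (K * ((x - c1) / ((x - c1) ^ 2 + a1 ^ 2) - (x - c2) / ((x - c2) ^ 2 + a2 ^ 2))) x := by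
    intro x
    have hp : ∀ (c a : ℝ), 0 < a → HasDerivAt (fun ω : ℝ => Real.log ((ω - c) ^ 2 + a ^ 2))
        (2 * (x - c) / ((x - c) ^ 2 + a ^ 2)) x := by
      intro c a ha
      have hq : HasDerivAt (fun ω : ℝ => (ω - c) ^ 2 + a ^ 2) (2 * (x - c)) x := by
        simpa using (((hasDerivAt_id x).sub_const c).pow 2).add_const (a ^ 2)
      simpa using hq.log (hD c a ha x).ne'
    have := (((hp c1 a1 h1).sub (hp c2 a2 h2)).const_mul (K / 2))
    refine this.congr_deriv ?_
    ring
  have hlim : ∀ l : Filter ℝ, Tendsto (fun ω : ℝ =>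
        ((ω - c1) ^ 2 + a1 ^ 2) / ((ω - c2) ^ 2 + a2 ^ 2)) l (nhds 1) →
      Tendsto F l (nhds 0) := by
    intro l hl
    have hcont : Tendsto (fun ω : ℝ => Real.log (((ω - c1) ^ 2 + a1 ^ 2) /
        ((ω - c2) ^ 2 + a2 ^ 2))) l (nhds 0) := by
      have := (Real.continuousAt_log one_ne_zero).tendsto.comp hl
      simpa [Function.comp_def] using this
    have : Tendsto (fun ω : ℝ => (K / 2) * Real.log (((ω - c1) ^ 2 + a1 ^ 2) /
        ((ω - c2) ^ 2 + a2 ^ 2))) l (nhds 0) := by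
      simpa using hcont.const_mul (K / 2)
    refine this.congr fun ω => ?_
    rw [Real.log_div (hD c1 a1 h1 ω).ne' (hD c2 a2 h2 ω).ne']
  have htop : Tendsto F atTop (nhds 0) := hlim _ (tendsto_ratio c1 c2 a1 a2 h2)
  have hbot : Tendsto F atBot (nhds 0) := by
    apply hlim
    have := (tendsto_ratio (-c1) (-c2) a1 a2 h2).comp tendsto_neg_atBot_atTop
    refine this.congr fun ω => ?_
    simp only [Function.comp]
    ring_nf
  simpa using MeasureTheory.integral_of_hasDerivAt_of_tendsto hderiv hint hbot htop

lemma phi_eq (l μ z x : ℂ) (hl : l.re < 0) (hμ : 0 < μ.re) :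
    (1 / (2 * Real.pi)) *
        ∫ ω : ℝ, ‖z * (I * ω - l)⁻¹ + x * (I * ω + (starRingEnd ℂ) μ)⁻¹‖ ^ 2
    = ‖z‖ ^ 2 / (2 * (-l.re)) + ‖x‖ ^ 2 / (2 * μ.re)
      + 2 * (z * (starRingEnd ℂ) x / (μ - l)).re := by
  set k : ℂ := z * (starRingEnd ℂ) x / (μ - l) with hk
  have hml : μ - l ≠ 0 := by
    intro h
    have := congrArg Complex.re h
    simp [Complex.sub_re] at this
    linarith
  have hw1ne : ∀ ω : ℝ, I * (ω : ℂ) - l ≠ 0 := by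
    intro ω h
    have := congrArg Complex.re h
    simp at this
    linarith
  have hw2ne : ∀ ω : ℝ, I * (ω : ℂ) + (starRingEnd ℂ) μ ≠ 0 := by
    intro ω h
    have := congrArg Complex.re h
    simp at this
    linarith
  have hw2cne : ∀ ω : ℝ, μ - I * (ω : ℂ) ≠ 0 := by
    intro ω h
    have := congrArg Complex.re h
    simp at this
    linarith
  have hD1 : ∀ ω : ℝ, ((ω - l.im) ^ 2 + (-l.re) ^ 2) ≠ 0 := by
    intro ω
    have hp := pow_pos (neg_pos.mpr hl) 2
    have : (0:ℝ) < (ω - l.im) ^ 2 + (-l.re) ^ 2 := by nlinarith [sq_nonneg (ω - l.im)]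
    exact this.ne'
  have hD2 : ∀ ω : ℝ, ((ω - μ.im) ^ 2 + μ.re ^ 2) ≠ 0 := by
    intro ω
    have : (0:ℝ) < (ω - μ.im) ^ 2 + μ.re ^ 2 := by positivity
    exact this.ne'
  have hpt : ∀ ω : ℝ, ‖z * (I * ω - l)⁻¹ + x * (I * ω + (starRingEnd ℂ) μ)⁻¹‖ ^ 2
      = (‖z‖ ^ 2 - 2 * k.re * l.re) * ((ω - l.im) ^ 2 + (-l.re) ^ 2)⁻¹
        + (‖x‖ ^ 2 + 2 * k.re * μ.re) * ((ω - μ.im) ^ 2 + μ.re ^ 2)⁻¹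
        + (2 * k.im) * ((ω - l.im) / ((ω - l.im) ^ 2 + (-l.re) ^ 2)
            - (ω - μ.im) / ((ω - μ.im) ^ 2 + μ.re ^ 2)) := by
    intro ω
    have hw2conj : (starRingEnd ℂ) (I * (ω : ℂ) + (starRingEnd ℂ) μ) = μ - I * ω := by
      simp [map_add, map_mul, Complex.conj_I, Complex.conj_ofReal]
      ring
    have hkml : z * (starRingEnd ℂ) x = k * (μ - l) := by
      rw [hk]; field_simp
    have hsum : μ - l = (I * (ω : ℂ) - l) + (μ - I * ω) := by ring
    have hT : z * (I * (ω:ℂ) - l)⁻¹ * (starRingEnd ℂ) (x * (I * ω + (starRingEnd ℂ) μ)⁻¹)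
        = k * (I * (ω:ℂ) - l)⁻¹ + k * (μ - I * ω)⁻¹ := by
      rw [map_mul, map_inv₀, hw2conj]
      field_simp [hw1ne ω, hw2cne ω]
      rw [hkml, hsum]
      ring
    have hre : ∀ (a w : ℂ), (a * w⁻¹).re = (a.re * w.re + a.im * w.im) / Complex.normSq w := by
      intro a w
      simp [Complex.mul_re, Complex.inv_re, Complex.inv_im]
      ring
    have hn1 : Complex.normSq (I * (ω:ℂ) - l) = (ω - l.im) ^ 2 + (-l.re) ^ 2 := by
      simp [Complex.normSq_apply]
      ring
    have hn2 : Complex.normSq (I * (ω:ℂ) + (starRingEnd ℂ) μ) = (ω - μ.im) ^ 2 + μ.re ^ 2 := by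
      simp [Complex.normSq_apply]
      ring
    have hn2c : Complex.normSq (μ - I * (ω:ℂ)) = (ω - μ.im) ^ 2 + μ.re ^ 2 := by
      simp [Complex.normSq_apply]
      ring
    rw [Complex.sq_norm, Complex.normSq_add, hT]
    rw [Complex.normSq_mul, Complex.normSq_mul, Complex.normSq_inv, Complex.normSq_inv,
      hn1, hn2, Complex.add_re, hre, hre, hn1, hn2c]
    have hq1 : (I * (ω:ℂ) - l).re = -l.re := by simp
    have hq2 : (I * (ω:ℂ) - l).im = ω - l.im := by simp
    have hq3 : (μ - I * (ω:ℂ)).re = μ.re := by simp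
    have hq4 : (μ - I * (ω:ℂ)).im = μ.im - ω := by simp
    have hz2 : ‖z‖ ^ 2 = Complex.normSq z := by rw [Complex.sq_norm]
    have hx2 : ‖x‖ ^ 2 = Complex.normSq x := by rw [Complex.sq_norm]
    rw [hq1, hq2, hq3, hq4, hz2, hx2]
    field_simp
    ring
  have ha1 : (0:ℝ) < -l.re := neg_pos.mpr hl
  have hcont : Continuous fun ω : ℝ =>
      ‖z * (I * ω - l)⁻¹ + x * (I * ω + (starRingEnd ℂ) μ)⁻¹‖ ^ 2 := by
    apply Continuous.pow
    apply Continuous.norm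
    apply Continuous.add
    · exact continuous_const.mul
        (((continuous_const.mul Complex.continuous_ofReal).sub continuous_const).inv₀ hw1ne)
    · exact continuous_const.mul
        (((continuous_const.mul Complex.continuous_ofReal).add continuous_const).inv₀ hw2ne)
  have hf1 : Integrable fun ω : ℝ => ((ω - l.im) ^ 2 + (-l.re) ^ 2)⁻¹ :=
    integrablePoisson l.im (-l.re) ha1
  have hf2 : Integrable fun ω : ℝ => ((ω - μ.im) ^ 2 + μ.re ^ 2)⁻¹ :=
    integrablePoisson μ.im μ.re hμ
  have hh : Integrable fun ω : ℝ =>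
      ‖z * (I * ω - l)⁻¹ + x * (I * ω + (starRingEnd ℂ) μ)⁻¹‖ ^ 2 := by
    refine (((hf1.const_mul (2 * ‖z‖ ^ 2)).add (hf2.const_mul (2 * ‖x‖ ^ 2))).mono'
      hcont.aestronglyMeasurable (Eventually.of_forall fun ω => ?_))
    have e1 : ‖z * (I * (ω:ℂ) - l)⁻¹‖ ^ 2 = ‖z‖ ^ 2 * ((ω - l.im) ^ 2 + (-l.re) ^ 2)⁻¹ := by
      rw [norm_mul, mul_pow, norm_inv, inv_pow,
        Complex.sq_norm (I * ω - l)]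
      congr 2
      simp [Complex.normSq_apply]
      ring
    have e2 : ‖x * (I * (ω:ℂ) + (starRingEnd ℂ) μ)⁻¹‖ ^ 2
        = ‖x‖ ^ 2 * ((ω - μ.im) ^ 2 + μ.re ^ 2)⁻¹ := by
      rw [norm_mul, mul_pow, norm_inv, inv_pow,
        Complex.sq_norm (I * ω + (starRingEnd ℂ) μ)]
      congr 2
      simp [Complex.normSq_apply]
      ring
    have hadd := norm_add_le (z * (I * (ω:ℂ) - l)⁻¹) (x * (I * (ω:ℂ) + (starRingEnd ℂ) μ)⁻¹)
    have hnn : (0:ℝ) ≤ ‖z * (I * (ω:ℂ) - l)⁻¹ + x * (I * (ω:ℂ) + (starRingEnd ℂ) μ)⁻¹‖ ^ 2 :=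
      sq_nonneg _
    rw [Real.norm_eq_abs, _root_.abs_of_nonneg hnn]
    have h2 : ‖z * (I * (ω:ℂ) - l)⁻¹ + x * (I * (ω:ℂ) + (starRingEnd ℂ) μ)⁻¹‖ ^ 2
        ≤ 2 * ‖z * (I * (ω:ℂ) - l)⁻¹‖ ^ 2 + 2 * ‖x * (I * (ω:ℂ) + (starRingEnd ℂ) μ)⁻¹‖ ^ 2 := by
      nlinarith [hadd, sq_nonneg (‖z * (I * (ω:ℂ) - l)⁻¹‖ - ‖x * (I * (ω:ℂ) + (starRingEnd ℂ) μ)⁻¹‖),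
        norm_nonneg (z * (I * (ω:ℂ) - l)⁻¹),
        norm_nonneg (x * (I * (ω:ℂ) + (starRingEnd ℂ) μ)⁻¹),
        norm_nonneg (z * (I * (ω:ℂ) - l)⁻¹ + x * (I * (ω:ℂ) + (starRingEnd ℂ) μ)⁻¹)]
    calc ‖z * (I * (ω:ℂ) - l)⁻¹ + x * (I * (ω:ℂ) + (starRingEnd ℂ) μ)⁻¹‖ ^ 2
        ≤ 2 * ‖z * (I * (ω:ℂ) - l)⁻¹‖ ^ 2 + 2 * ‖x * (I * (ω:ℂ) + (starRingEnd ℂ) μ)⁻¹‖ ^ 2 := h2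
      _ = 2 * ‖z‖ ^ 2 * ((ω - l.im) ^ 2 + (-l.re) ^ 2)⁻¹
            + 2 * ‖x‖ ^ 2 * ((ω - μ.im) ^ 2 + μ.re ^ 2)⁻¹ := by rw [e1, e2]; ring
  have hfun : (fun ω : ℝ => ‖z * (I * ω - l)⁻¹ + x * (I * ω + (starRingEnd ℂ) μ)⁻¹‖ ^ 2)
      = fun ω : ℝ => (‖z‖ ^ 2 - 2 * k.re * l.re) * ((ω - l.im) ^ 2 + (-l.re) ^ 2)⁻¹
        + (‖x‖ ^ 2 + 2 * k.re * μ.re) * ((ω - μ.im) ^ 2 + μ.re ^ 2)⁻¹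
        + (2 * k.im) * ((ω - l.im) / ((ω - l.im) ^ 2 + (-l.re) ^ 2)
            - (ω - μ.im) / ((ω - μ.im) ^ 2 + μ.re ^ 2)) := funext hpt
  rw [hfun] at hh ⊢
  have hX : Integrable fun ω : ℝ =>
      (‖z‖ ^ 2 - 2 * k.re * l.re) * ((ω - l.im) ^ 2 + (-l.re) ^ 2)⁻¹
        + (‖x‖ ^ 2 + 2 * k.re * μ.re) * ((ω - μ.im) ^ 2 + μ.re ^ 2)⁻¹ :=
    (hf1.const_mul _).add (hf2.const_mul _)
  have hKg : Integrable fun ω : ℝ =>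
      (2 * k.im) * ((ω - l.im) / ((ω - l.im) ^ 2 + (-l.re) ^ 2)
        - (ω - μ.im) / ((ω - μ.im) ^ 2 + μ.re ^ 2)) := by
    refine (hh.sub hX).congr (Eventually.of_forall fun ω => ?_)
    simp only [Pi.sub_apply]
    ring
  rw [integral_add hX hKg]
  rw [integral_add (hf1.const_mul _) (hf2.const_mul _), MeasureTheory.integral_const_mul,
    MeasureTheory.integral_const_mul, integralPoisson l.im (-l.re) ha1, integralPoisson μ.im μ.re hμ,
    integral_g_zero l.im μ.im (-l.re) μ.re (2 * k.im) ha1 hμ hKg]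
  have hπ : Real.pi ≠ 0 := Real.pi_ne_zero
  have hμne : μ.re ≠ 0 := hμ.ne'
  have hlne : l.re ≠ 0 := ne_of_lt hl
  field_simp
  ring

lemma main_aux (l μ z x : ℂ) (hl : l.re < 0) (hμ : 0 < μ.re) :
    (1 / (2 * Real.pi)) *
        ∫ ω : ℝ, ‖z * (I * ω - l)⁻¹ + x * (I * ω + (starRingEnd ℂ) μ)⁻¹‖ ^ 2
    = ‖z‖ ^ 2 * ‖μ + (starRingEnd ℂ) l‖ ^ 2 / (2 * ‖μ - l‖ ^ 2 * (-l).re)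
      + Complex.normSq (x + ((2 * μ.re : ℝ) : ℂ) * z / (μ - l)) / (2 * μ.re) := by
  rw [phi_eq l μ z x hl hμ]
  have hml : μ - l ≠ 0 := by
    intro h
    have := congrArg Complex.re h
    simp [Complex.sub_re] at this
    linarith
  have hN : Complex.normSq (μ - l) ≠ 0 := by
    simpa using (Complex.normSq_pos.mpr hml).ne'
  have hz2 : ‖z‖ ^ 2 = Complex.normSq z := by rw [Complex.sq_norm]
  have hx2 : ‖x‖ ^ 2 = Complex.normSq x := by rw [Complex.sq_norm]
  have hm2 : ‖μ - l‖ ^ 2 = Complex.normSq (μ - l) := by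
    rw [Complex.sq_norm]
  have hkey : ‖μ + (starRingEnd ℂ) l‖ ^ 2 = Complex.normSq (μ - l) + 4 * μ.re * l.re := by
    rw [Complex.sq_norm]
    simp [Complex.normSq_apply, Complex.add_re, Complex.add_im, Complex.sub_re,
      Complex.sub_im, Complex.conj_re, Complex.conj_im]
    ring
  have hs : Complex.normSq (((2 * μ.re : ℝ) : ℂ) * z / (μ - l))
      = (2 * μ.re) ^ 2 * Complex.normSq z / Complex.normSq (μ - l) := by
    rw [map_div₀, Complex.normSq_mul, Complex.normSq_ofReal]
    ring
  have hcross : (x * (starRingEnd ℂ) (((2 * μ.re : ℝ) : ℂ) * z / (μ - l))).re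
      = 2 * μ.re * (z * (starRingEnd ℂ) x / (μ - l)).re := by
    have h1 : x * (starRingEnd ℂ) (((2 * μ.re : ℝ) : ℂ) * z / (μ - l))
        = (starRingEnd ℂ) (((2 * μ.re : ℝ) : ℂ) * (z * (starRingEnd ℂ) x / (μ - l))) := by
      simp only [map_mul, map_div₀, Complex.conj_conj, Complex.conj_ofReal]
      ring
    rw [h1, Complex.conj_re, Complex.re_ofReal_mul]
  rw [Complex.normSq_add, hs, hcross, hz2, hx2, hm2, hkey]
  have hlne : l.re ≠ 0 := ne_of_lt hl
  have hμne : μ.re ≠ 0 := hμ.ne'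
  have hneg : (-l).re = -l.re := by simp
  rw [hneg]
  field_simp
  ring

/-- For `Re λ < 0`, `Re μ > 0` with `|λ + conj μ| ≤ ε`, the minimum over `x ∈ ℂ` of
`‖z v[−conj λ] + x v[μ]‖²_{H₂}` equals `|z|²|μ + conj λ|²/(2|μ − λ|² Re(−λ))`,
which is at most `|z|² ε²/(2|Re λ|³)`. -/
theorem stmt_11 (l μ z : ℂ) (ε : ℝ) (hl : l.re < 0) (hμ : 0 < μ.re)
    (hε : ‖l + (starRingEnd ℂ) μ‖ ≤ ε) :
    IsLeast {r : ℝ | ∃ x : ℂ, r = (1 / (2 * Real.pi)) *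
        ∫ ω : ℝ, ‖z * (I * ω - l)⁻¹ + x * (I * ω + (starRingEnd ℂ) μ)⁻¹‖ ^ 2}
      (‖z‖ ^ 2 * ‖μ + (starRingEnd ℂ) l‖ ^ 2 / (2 * ‖μ - l‖ ^ 2 * (-l).re)) ∧
    ‖z‖ ^ 2 * ‖μ + (starRingEnd ℂ) l‖ ^ 2 / (2 * ‖μ - l‖ ^ 2 * (-l).re)
      ≤ ‖z‖ ^ 2 * ε ^ 2 / (2 * |l.re| ^ 3) := by
  have ha1 : (0:ℝ) < -l.re := neg_pos.mpr hl
  constructor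
  · constructor
    · refine ⟨-(((2 * μ.re : ℝ) : ℂ) * z / (μ - l)), ?_⟩
      rw [main_aux l μ z _ hl hμ]
      simp
    · rintro r ⟨x, rfl⟩
      rw [main_aux l μ z x hl hμ]
      have h0 : 0 ≤ Complex.normSq (x + ((2 * μ.re : ℝ) : ℂ) * z / (μ - l)) / (2 * μ.re) := by
        have := Complex.normSq_nonneg (x + ((2 * μ.re : ℝ) : ℂ) * z / (μ - l))
        positivity
      linarith
  · have hε0 : (0:ℝ) ≤ ε := le_trans (norm_nonneg _) hε
    have h1 : ‖μ + (starRingEnd ℂ) l‖ ≤ ε := by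
      have : ‖μ + (starRingEnd ℂ) l‖ = ‖l + (starRingEnd ℂ) μ‖ := by
        rw [← Complex.norm_conj (μ + (starRingEnd ℂ) l), map_add,
          Complex.conj_conj, add_comm]
      rw [this]
      exact hε
    have h2 : -l.re ≤ ‖μ - l‖ := by
      have := Complex.re_le_norm (μ - l)
      rw [Complex.sub_re] at this
      linarith
    have hnum : ‖z‖ ^ 2 * ‖μ + (starRingEnd ℂ) l‖ ^ 2 ≤ ‖z‖ ^ 2 * ε ^ 2 := by
      apply mul_le_mul_of_nonneg_left _ (by positivity)
      exact pow_le_pow_left₀ (norm_nonneg _) h1 2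
    have hsq : (-l.re) ^ 2 ≤ ‖μ - l‖ ^ 2 := pow_le_pow_left₀ (le_of_lt ha1) h2 2
    have hneg : (-l).re = -l.re := by simp
    have habs : |l.re| = -l.re := abs_of_neg hl
    rw [hneg, habs]
    have hden : 2 * (-l.re) ^ 3 ≤ 2 * ‖μ - l‖ ^ 2 * (-l.re) := by nlinarith
    exact div_le_div₀ (by positivity) hnum (by positivity) hden
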